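/- Let d ≥ 1, 0 < s < 1, β ∈ [0,1], α > 0, and g ∈ L²(𝕋^d;ℂ) with ĝ_0 = 0. Let u be the solution of the fractional denoising problem with data g, i.e. û_k = α(|k|^{2(s+β)} + α)^{−1} ĝ_k for k ≠ 0 and û_0 = 0. Let n ≥ 2 be even, let g_n ∈ S_n with (g_n)∧_0 = 0, and let u_n = (2π)^{−d} Σ_{k∈Z_n^d, k≠0} α(|k|^{2(s+β)} + α)^{−1} (g_n)∧_k φ^k be the solution of the discrete problem with data g_n. Then |u − u_n|_s² + (α/2)|u − u_n|_{−β}² ≤ (α/2)|g − g_n|_{−β}². -/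

import Mathlib

open MeasureTheory Real

noncomputable section

/-- Fundamental domain `(0, 2π]^d` of the `d`-dimensional torus `𝕋^d = (ℝ/2πℤ)^d`. -/
def Box (d : ℕ) : Set (Fin d → ℝ) := Set.univ.pi fun _ => Set.Ioc 0 (2 * π)

/-- Lebesgue measure on the torus, realized on the fundamental domain. -/
def tMeas (d : ℕ) : Measure (Fin d → ℝ) := MeasureTheory.volume.restrict (Box d)

/-- The character `φ^k(x) = e^{i k·x}`. -/
def phi (d : ℕ) (k : Fin d → ℤ) (x : Fin d → ℝ) : ℂ :=
  Complex.exp (Complex.I * ∑ i, (k i : ℂ) * (x i : ℂ))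

/-- Fourier coefficient `v̂_k = ∫_{𝕋^d} v(x) e^{-i k·x} dx`. -/
def fc (d : ℕ) (v : (Fin d → ℝ) → ℂ) (k : Fin d → ℤ) : ℂ :=
  ∫ x, v x * Complex.exp (-(Complex.I * ∑ i, (k i : ℂ) * (x i : ℂ))) ∂(tMeas d)

/-- Euclidean norm `|k|` of a frequency vector `k ∈ ℤ^d`. -/
def knorm (d : ℕ) (k : Fin d → ℤ) : ℝ := Real.sqrt (∑ i, ((k i : ℝ)) ^ 2)

/-- Summand family `|k|^{2μ}|c_k|²`, `k ≠ 0`, of the squared Sobolev seminorm of a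
coefficient sequence. -/
def sobFamC (d : ℕ) (μ : ℝ) (c : (Fin d → ℤ) → ℂ) :
    {k : Fin d → ℤ // k ≠ 0} → ℝ :=
  fun k => knorm d k.1 ^ (2 * μ) * ‖c k.1‖ ^ 2

/-- Summand family of the squared Sobolev seminorm `|v|_μ²`. -/
def sobFam (d : ℕ) (μ : ℝ) (v : (Fin d → ℝ) → ℂ) := sobFamC d μ (fc d v)

/-- Sobolev seminorm of order `μ` of a coefficient sequence. -/
def sobNormC (d : ℕ) (μ : ℝ) (c : (Fin d → ℤ) → ℂ) : ℝ :=
  Real.sqrt (∑' k, sobFamC d μ c k)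

/-- Sobolev seminorm `|v|_μ = (Σ_{k≠0} |k|^{2μ}|v̂_k|²)^{1/2}`. -/
def sobNorm (d : ℕ) (μ : ℝ) (v : (Fin d → ℝ) → ℂ) : ℝ := sobNormC d μ (fc d v)

/-- Frequency set `Z_n^d = {k : -n/2 ≤ k_i ≤ n/2 - 1}`. -/
def Znd (d n : ℕ) : Finset (Fin d → ℤ) :=
  Fintype.piFinset fun _ => Finset.Icc (-((n : ℤ) / 2)) ((n : ℤ) / 2 - 1)

/-- Space `S_n` of trigonometric polynomials with frequencies in `Z_n^d`. -/
def Sn (d n : ℕ) : Set ((Fin d → ℝ) → ℂ) :=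
  {v | ∃ c : (Fin d → ℤ) → ℂ, v = fun x => ∑ k ∈ Znd d n, c k * phi d k x}

/-- L² projection `P_n v = (2π)^{-d} Σ_{k ∈ Z_n^d} v̂_k φ^k`. -/
def Pn (d n : ℕ) (v : (Fin d → ℝ) → ℂ) : (Fin d → ℝ) → ℂ :=
  fun x => (((2 * π) ^ d : ℝ))⁻¹ • ∑ k ∈ Znd d n, fc d v k * phi d k x

/-- Index set `{0,…,n-1}^d` of the interpolation grid. -/
def gridIdx (d n : ℕ) : Finset (Fin d → ℕ) := Fintype.piFinset fun _ => Finset.range n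

/-- Grid point `x_j = (2π/n) j`. -/
def gridPt (d n : ℕ) (j : Fin d → ℕ) : Fin d → ℝ := fun i => 2 * π / (n : ℝ) * (j i : ℝ)

/-- Trigonometric polynomial with discrete Fourier coefficients
`c_k = n^{-d} Σ_j V_j e^{-i k·x_j}` built from grid values `V`. -/
def interpOfValues (d n : ℕ) (V : (Fin d → ℕ) → ℂ) : (Fin d → ℝ) → ℂ :=
  fun x => ∑ k ∈ Znd d n,
    (((n : ℂ) ^ d)⁻¹ * ∑ j ∈ gridIdx d n,
        V j * Complex.exp (-(Complex.I * ∑ i, (k i : ℂ) * (gridPt d n j i : ℂ)))) * phi d k x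

/-- Trigonometric interpolant `I_n v`. -/
def Interp (d n : ℕ) (v : (Fin d → ℝ) → ℂ) : (Fin d → ℝ) → ℂ :=
  interpOfValues d n fun j => v (gridPt d n j)

/-- Fractional Laplacian `(−Δ)^σ` realized on trigonometric polynomials in `S_n`. -/
def fLap (d n : ℕ) (σ : ℝ) (v : (Fin d → ℝ) → ℂ) : (Fin d → ℝ) → ℂ :=
  fun x => (((2 * π) ^ d : ℝ))⁻¹ •
    ∑ k ∈ (Znd d n).erase 0, (knorm d k ^ (2 * σ)) • (fc d v k * phi d k x)

/-- Membership in `H^μ(𝕋^d;ℂ)`: `v ∈ L²` with `|v|_μ < ∞`. -/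
def memH (d : ℕ) (μ : ℝ) (v : (Fin d → ℝ) → ℂ) : Prop :=
  MemLp v 2 (tMeas d) ∧ Summable (sobFam d μ v)

/-- Membership in `Ḣ^μ(𝕋^d;ℂ)`: additionally `v̂_0 = 0`. -/
def memHdot (d : ℕ) (μ : ℝ) (v : (Fin d → ℝ) → ℂ) : Prop :=
  memH d μ v ∧ fc d v 0 = 0

/-- Solution of a discrete spectral problem: given a Fourier multiplier `m` and data
`g`, returns `(2π)^{-d} Σ_{k ∈ Z_n^d, k ≠ 0} m(k) ĝ_k φ^k`. -/
def discSol (d n : ℕ) (m : (Fin d → ℤ) → ℝ) (g : (Fin d → ℝ) → ℂ) : (Fin d → ℝ) → ℂ :=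
  fun x => (((2 * π) ^ d : ℝ))⁻¹ • ∑ k ∈ (Znd d n).erase 0, m k • (fc d g k * phi d k x)


lemma int1d (m : ℤ) : ∫ t in Set.Ioc (0:ℝ) (2*π), Complex.exp (Complex.I * m * t) =
    if m = 0 then (2*π : ℝ) else 0 := by
  rw [← intervalIntegral.integral_of_le (by positivity)]
  by_cases hm : m = 0
  · simp [hm]
  · have hc : (Complex.I * m) ≠ 0 := by
      simp [Complex.ext_iff, hm]
    rw [if_neg hm]
    have := integral_exp_mul_complex (a := 0) (b := 2*π) hc
    simp only [mul_comm (Complex.I * (m:ℂ)) _] at this ⊢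
    rw [this]
    have h1 : Complex.exp ((2*π : ℝ) * (Complex.I * m)) = 1 := by
      have := Complex.exp_int_mul_two_pi_mul_I m
      rw [← this]
      ring_nf
      norm_num [Complex.ofReal_mul]
      ring_nf
    push_cast at h1
    simp [h1]

lemma measurableSet_Box (d : ℕ) : MeasurableSet (Box d) :=
  MeasurableSet.univ_pi fun _ => measurableSet_Ioc

lemma integral_phi (d : ℕ) (k : Fin d → ℤ) :
    ∫ x, phi d k x ∂(tMeas d) = if k = 0 then (((2*π)^d : ℝ) : ℂ) else 0 := by
  have hphi : ∀ x, phi d k x = ∏ i, Complex.exp (Complex.I * (k i) * (x i)) := by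
    intro x
    rw [phi, Finset.mul_sum, Complex.exp_sum]
    congr 1; ext i; ring_nf
  have hind : (Box d).indicator (fun x => phi d k x) =
      fun x => ∏ i, (Set.Ioc (0:ℝ) (2*π)).indicator
        (fun t => Complex.exp (Complex.I * (k i) * (t:ℂ))) (x i) := by
    funext x
    by_cases hx : x ∈ Box d
    · rw [Set.indicator_of_mem hx, hphi]
      have hxi : ∀ i, x i ∈ Set.Ioc (0:ℝ) (2*π) := by
        intro i; exact hx i (Set.mem_univ i)
      exact Finset.prod_congr rfl fun i _ =>
        (Set.indicator_of_mem (hxi i) (fun t : ℝ => Complex.exp (Complex.I * (k i) * (t:ℂ)))).symm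
    · rw [Set.indicator_of_notMem hx]
      obtain ⟨i, -, hi⟩ : ∃ i ∈ Finset.univ, x i ∉ Set.Ioc (0:ℝ) (2*π) := by
        by_contra h
        push_neg at h
        exact hx fun i _ => h i (Finset.mem_univ i)
      exact (Finset.prod_eq_zero (Finset.mem_univ i)
        (Set.indicator_of_notMem hi _)).symm
  rw [tMeas, ← integral_indicator (measurableSet_Box d), hind, MeasureTheory.volume_pi,
    MeasureTheory.integral_fintype_prod_eq_prod
      (f := fun i t => (Set.Ioc (0:ℝ) (2*π)).indicator
        (fun t => Complex.exp (Complex.I * (k i) * (t:ℂ))) t)]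
  have h1 : ∀ i, (∫ t : ℝ, (Set.Ioc (0:ℝ) (2*π)).indicator
      (fun t => Complex.exp (Complex.I * (k i) * (t:ℂ))) t) =
      if k i = 0 then ((2*π : ℝ) : ℂ) else 0 := by
    intro i
    rw [integral_indicator measurableSet_Ioc, int1d]
    split <;> simp
  simp_rw [h1]
  by_cases hk : k = 0
  · subst hk; simp
  · obtain ⟨i, hi⟩ : ∃ i, k i ≠ 0 := by
      by_contra h; push_neg at h; exact hk (funext h)
    rw [if_neg hk]
    exact Finset.prod_eq_zero (Finset.mem_univ i) (by rw [if_neg hi])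

instance tMeas_finite (d : ℕ) : IsFiniteMeasure (tMeas d) := by
  constructor
  rw [tMeas, Measure.restrict_apply_univ, Box, volume_pi_pi]
  simp [Real.volume_Ioc]
  exact Or.inl (ENNReal.mul_lt_top (by norm_num) ENNReal.ofReal_lt_top)

lemma cont_phi (d : ℕ) (k : Fin d → ℤ) : Continuous (phi d k) := by
  unfold phi
  fun_prop

lemma norm_phi (d : ℕ) (k : Fin d → ℤ) (x : Fin d → ℝ) : ‖phi d k x‖ = 1 := by
  have : (∑ i, (k i : ℂ) * (x i : ℂ)) = ((∑ i, (k i : ℝ) * x i : ℝ) : ℂ) := by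
    push_cast; ring
  rw [phi, this]
  simp [Complex.norm_exp]

lemma integrable_phi (d : ℕ) (k : Fin d → ℤ) : Integrable (phi d k) (tMeas d) :=
  (integrable_const (1:ℝ)).mono' (cont_phi d k).aestronglyMeasurable
    (Filter.Eventually.of_forall fun x => le_of_eq (norm_phi d k x))

lemma phi_mul_char (d : ℕ) (k l : Fin d → ℤ) (x : Fin d → ℝ) :
    phi d k x * Complex.exp (-(Complex.I * ∑ i, (l i : ℂ) * (x i : ℂ))) = phi d (k - l) x := by
  have h : ∑ i, ((k - l) i : ℂ) * (x i : ℂ) =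
      (∑ i, (k i : ℂ) * x i) - ∑ i, (l i : ℂ) * x i := by
    rw [← Finset.sum_sub_distrib]
    refine Finset.sum_congr rfl fun i _ => ?_
    simp only [Pi.sub_apply]; push_cast; ring
  rw [phi, phi, ← Complex.exp_add, h]
  ring_nf

lemma fc_phi (d : ℕ) (k l : Fin d → ℤ) :
    fc d (phi d k) l = if k = l then (((2*π)^d : ℝ) : ℂ) else 0 := by
  rw [fc]
  simp_rw [phi_mul_char]
  rw [integral_phi]
  simp [sub_eq_zero]

lemma fc_finsum (d : ℕ) (F : Finset (Fin d → ℤ)) (a : (Fin d → ℤ) → ℂ) (l : Fin d → ℤ) :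
    fc d (fun x => ∑ k ∈ F, a k * phi d k x) l =
      if l ∈ F then (((2*π)^d : ℝ) : ℂ) * a l else 0 := by
  rw [fc]
  simp_rw [Finset.sum_mul, mul_assoc, phi_mul_char]
  rw [integral_finset_sum _ (fun k _ => (integrable_phi d (k - l)).const_mul (a k))]
  simp_rw [MeasureTheory.integral_const_mul, integral_phi, sub_eq_zero, mul_ite, mul_zero]
  rw [Finset.sum_ite_eq' F l (fun k => a k * (((2*π)^d : ℝ) : ℂ))]
  split <;> ring_nf

lemma integrable_mul_char (d : ℕ) {v : (Fin d → ℝ) → ℂ} (hv : MemLp v 2 (tMeas d))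
    (l : Fin d → ℤ) :
    Integrable (fun x => v x * Complex.exp (-(Complex.I * ∑ i, (l i : ℂ) * (x i : ℂ))))
      (tMeas d) := by
  have hvi : Integrable v (tMeas d) := hv.integrable (by norm_num)
  have h := hvi.bdd_mul (f := fun x => Complex.exp (-(Complex.I * ∑ i, (l i : ℂ) * (x i : ℂ))))
    ?_ (c := 1) (Filter.Eventually.of_forall fun x => ?_)
  · exact (by simpa [mul_comm] using h)
  · have : Continuous fun x : Fin d → ℝ =>
        Complex.exp (-(Complex.I * ∑ i, (l i : ℂ) * (x i : ℂ))) := by fun_prop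
    exact this.aestronglyMeasurable
  · have h0 := norm_phi d (-l) x
    rw [phi] at h0
    simp only [Pi.neg_apply, Int.cast_neg, neg_mul, Finset.sum_neg_distrib, mul_neg] at h0
    simpa [mul_neg, Finset.mul_sum] using le_of_eq h0

lemma fc_sub (d : ℕ) {v w : (Fin d → ℝ) → ℂ} (hv : MemLp v 2 (tMeas d))
    (hw : MemLp w 2 (tMeas d)) (l : Fin d → ℤ) :
    fc d (fun x => v x - w x) l = fc d v l - fc d w l := by
  rw [fc, fc, fc]
  simp_rw [sub_mul]
  exact integral_sub (integrable_mul_char d hv l) (integrable_mul_char d hw l)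

lemma memLp_phi (d : ℕ) (k : Fin d → ℤ) : MemLp (phi d k) 2 (tMeas d) :=
  MemLp.of_bound (cont_phi d k).aestronglyMeasurable 1
    (Filter.Eventually.of_forall fun x => le_of_eq (norm_phi d k x))

lemma conj_phi (d : ℕ) (k : Fin d → ℤ) (x : Fin d → ℝ) :
    (starRingEnd ℂ) (phi d k x) = Complex.exp (-(Complex.I * ∑ i, (k i : ℂ) * (x i : ℂ))) := by
  rw [phi, ← Complex.exp_conj]
  congr 1
  simp [map_sum, Complex.conj_ofReal]

-- normalized characters in L²

def EB (d : ℕ) (k : Fin d → ℤ) : Lp ℂ 2 (tMeas d) :=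
  (((Real.sqrt ((2*π)^d))⁻¹ : ℝ) : ℂ) • (memLp_phi d k).toLp (phi d k)

lemma inner_toLp (d : ℕ) {v w : (Fin d → ℝ) → ℂ} (hv : MemLp v 2 (tMeas d))
    (hw : MemLp w 2 (tMeas d)) :
    @inner ℂ _ _ (hv.toLp v) (hw.toLp w) = ∫ x, (starRingEnd ℂ) (v x) * w x ∂(tMeas d) := by
  rw [MeasureTheory.L2.inner_def]
  apply integral_congr_ae
  filter_upwards [hv.coeFn_toLp, hw.coeFn_toLp] with x h1 h2
  rw [h1, h2, RCLike.inner_apply, mul_comm]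

lemma inner_phi_toLp (d : ℕ) {v : (Fin d → ℝ) → ℂ} (hv : MemLp v 2 (tMeas d))
    (k : Fin d → ℤ) :
    @inner ℂ _ _ ((memLp_phi d k).toLp (phi d k)) (hv.toLp v) = fc d v k := by
  rw [inner_toLp d (memLp_phi d k) hv, fc]
  apply integral_congr_ae
  filter_upwards with x
  rw [conj_phi, mul_comm]

lemma twopi_pow_pos (d : ℕ) : (0:ℝ) < (2*π)^d := by positivity

lemma orthonormal_EB (d : ℕ) : Orthonormal ℂ (EB d) := by
  rw [orthonormal_iff_ite]
  intro k l
  rw [EB, EB, inner_smul_left, inner_smul_right, inner_phi_toLp d (memLp_phi d l) k,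
    fc_phi]
  rw [Complex.conj_ofReal]
  by_cases h : k = l
  · subst h
    rw [if_pos rfl, if_pos rfl]
    have h2 : ((Real.sqrt ((2*π)^d))⁻¹ : ℝ) * ((Real.sqrt ((2*π)^d))⁻¹ : ℝ) * ((2*π)^d) = 1 := by
      rw [← mul_inv, Real.mul_self_sqrt (le_of_lt (twopi_pow_pos d))]
      exact inv_mul_cancel₀ (ne_of_gt (twopi_pow_pos d))
    rw [← mul_assoc, ← Complex.ofReal_mul, ← Complex.ofReal_mul, h2, Complex.ofReal_one]
  · rw [if_neg (fun hh => h hh.symm), if_neg h, mul_zero, mul_zero]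

lemma bessel_fc (d : ℕ) {v : (Fin d → ℝ) → ℂ} (hv : MemLp v 2 (tMeas d)) :
    Summable fun k : Fin d → ℤ => ‖fc d v k‖ ^ 2 := by
  have h := (orthonormal_EB d).inner_products_summable (hv.toLp v)
  have heq : ∀ k, ‖@inner ℂ _ _ (EB d k) (hv.toLp v)‖ ^ 2 =
      ((Real.sqrt ((2*π)^d))⁻¹)^2 * ‖fc d v k‖ ^ 2 := by
    intro k
    rw [EB, inner_smul_left, inner_phi_toLp d hv k, Complex.conj_ofReal, norm_mul,
      mul_pow, Complex.norm_real, Real.norm_eq_abs,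
      abs_of_nonneg (by positivity)]
  simp_rw [heq] at h
  have hc : ((Real.sqrt ((2*π)^d))⁻¹ : ℝ)^2 ≠ 0 := by positivity
  have := h.mul_left (((Real.sqrt ((2*π)^d))⁻¹ : ℝ)^2)⁻¹
  refine this.congr fun k => ?_
  rw [← mul_assoc, inv_mul_cancel₀ hc, one_mul]

lemma knorm_one_le (d : ℕ) {k : Fin d → ℤ} (hk : k ≠ 0) : 1 ≤ knorm d k := by
  obtain ⟨i, hi⟩ : ∃ i, k i ≠ 0 := by
    by_contra h; push_neg at h; exact hk (funext h)
  have h1 : (1:ℝ) ≤ ∑ i, ((k i : ℝ)) ^ 2 := by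
    have : (1:ℝ) ≤ ((k i : ℝ)) ^ 2 := by
      have : (1:ℤ) ≤ (k i)^2 := by
        rcases lt_or_gt_of_ne hi with h | h <;> nlinarith
      exact_mod_cast this
    calc (1:ℝ) ≤ ((k i : ℝ))^2 := this
    _ ≤ ∑ i, ((k i : ℝ)) ^ 2 :=
      Finset.single_le_sum (f := fun j => ((k j : ℝ))^2) (fun j _ => sq_nonneg _) (Finset.mem_univ i)
  calc (1:ℝ) = Real.sqrt 1 := (Real.sqrt_one).symm
  _ ≤ _ := Real.sqrt_le_sqrt h1

lemma knorm_pos (d : ℕ) {k : Fin d → ℤ} (hk : k ≠ 0) : 0 < knorm d k :=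
  lt_of_lt_of_le one_pos (knorm_one_le d hk)

-- discSol as a finite trig sum

lemma discSol_eq (d n : ℕ) (m : (Fin d → ℤ) → ℝ) (g : (Fin d → ℝ) → ℂ) :
    discSol d n m g = fun x => ∑ k ∈ (Znd d n).erase 0,
      (((((2 * π) ^ d : ℝ))⁻¹ : ℂ) * (m k : ℂ) * fc d g k) * phi d k x := by
  funext x
  rw [discSol, Finset.smul_sum]
  refine Finset.sum_congr rfl fun k _ => ?_
  rw [smul_smul]
  push_cast [Complex.real_smul]
  ring

lemma memLp_finsum (d : ℕ) (F : Finset (Fin d → ℤ)) (a : (Fin d → ℤ) → ℂ) :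
    MemLp (fun x => ∑ k ∈ F, a k * phi d k x) 2 (tMeas d) := by
  have := memLp_finset_sum' F fun k _ => (memLp_phi d k).const_mul (a k)
  have h : (fun x => ∑ k ∈ F, a k * phi d k x) = ∑ k ∈ F, fun x => a k * phi d k x := by
    funext x; simp
  rw [h]; exact this

lemma fc_discSol (d n : ℕ) (m : (Fin d → ℤ) → ℝ) (g : (Fin d → ℝ) → ℂ) (l : Fin d → ℤ) :
    fc d (discSol d n m g) l =
      if l ∈ (Znd d n).erase 0 then (m l : ℂ) * fc d g l else 0 := by
  rw [discSol_eq, fc_finsum]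
  split
  · rw [← mul_assoc, ← mul_assoc, mul_inv_cancel₀ (Complex.ofReal_ne_zero.mpr (ne_of_gt (twopi_pow_pos d)) : (((2*π)^d : ℝ):ℂ) ≠ 0),
      one_mul]
  · rfl

lemma fc_Sn (d n : ℕ) {g : (Fin d → ℝ) → ℂ} (hg : g ∈ Sn d n) {l : Fin d → ℤ}
    (hl : l ∉ Znd d n) : fc d g l = 0 := by
  obtain ⟨c, rfl⟩ := hg
  rw [fc_finsum, if_neg hl]

lemma memLp_Sn (d n : ℕ) {g : (Fin d → ℝ) → ℂ} (hg : g ∈ Sn d n) :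
    MemLp g 2 (tMeas d) := by
  obtain ⟨c, rfl⟩ := hg
  exact memLp_finsum d _ c

lemma key_ineq {α T : ℝ} (ha : 0 < α) (hT : 0 ≤ T) :
    (α/(T+α))^2 * (T + α/2) ≤ α/2 := by
  have hTa : 0 < T + α := by linarith
  rw [div_pow, div_mul_eq_mul_div, div_le_iff₀ (by positivity)]
  nlinarith [sq_nonneg T, sq_nonneg α]

/-- abstract error estimate
`|u - u_n|_s² + (α/2)|u - u_n|_{-β}² ≤ (α/2)|g - g_n|_{-β}²` for the spectral
approximation of the fractional denoising problem. -/
theorem denoising_abstract_error (d n : ℕ) (hd : 1 ≤ d) (hn : 2 ≤ n) (hne : Even n)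
    (s β α : ℝ) (hs0 : 0 < s) (hs1 : s < 1) (hb0 : 0 ≤ β) (hb1 : β ≤ 1) (ha : 0 < α)
    (g : (Fin d → ℝ) → ℂ) (hg : MemLp g 2 (tMeas d)) (hg0 : fc d g 0 = 0)
    (u : (Fin d → ℝ) → ℂ) (hu : MemLp u 2 (tMeas d)) (hu0 : fc d u 0 = 0)
    (huk : ∀ k : Fin d → ℤ, k ≠ 0 →
      fc d u k = ((α / (knorm d k ^ (2 * (s + β)) + α) : ℝ) : ℂ) * fc d g k)
    (gn : (Fin d → ℝ) → ℂ) (hgn : gn ∈ Sn d n) (hgn0 : fc d gn 0 = 0) :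
    (sobNorm d s (fun x =>
        u x - discSol d n (fun k => α / (knorm d k ^ (2 * (s + β)) + α)) gn x)) ^ 2 +
      (α / 2) * (sobNorm d (-β) (fun x =>
        u x - discSol d n (fun k => α / (knorm d k ^ (2 * (s + β)) + α)) gn x)) ^ 2 ≤
      (α / 2) * (sobNorm d (-β) (fun x => g x - gn x)) ^ 2 := by
  set mf : (Fin d → ℤ) → ℝ := fun k => α / (knorm d k ^ (2 * (s + β)) + α) with hmf
  set un : (Fin d → ℝ) → ℂ := discSol d n mf gn with hun
  set e : (Fin d → ℝ) → ℂ := fun x => u x - un x with he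
  set δ : (Fin d → ℝ) → ℂ := fun x => g x - gn x with hδ
  have hgnLp : MemLp gn 2 (tMeas d) := memLp_Sn d n hgn
  have hunLp : MemLp un 2 (tMeas d) := by
    rw [hun, discSol_eq]
    exact memLp_finsum d _ _
  have hδLp : MemLp δ 2 (tMeas d) := by
    have := hg.sub hgnLp
    exact this
  -- nonnegativity and positivity of multiplier data
  have hT : ∀ k : Fin d → ℤ, 0 ≤ knorm d k ^ (2 * (s + β)) := fun k =>
    Real.rpow_nonneg (Real.sqrt_nonneg _) _
  have hm_nonneg : ∀ k, 0 ≤ mf k := fun k => by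
    have := hT k; positivity
  -- Fourier coefficients of the error
  have hfc_e : ∀ k : Fin d → ℤ, k ≠ 0 →
      fc d e k = ((mf k : ℝ) : ℂ) * fc d δ k := by
    intro k hk
    have h1 : fc d e k = fc d u k - fc d un k := fc_sub d hu hunLp k
    have h2 : fc d δ k = fc d g k - fc d gn k := fc_sub d hg hgnLp k
    have h3 : fc d un k = if k ∈ (Znd d n).erase 0 then (mf k : ℂ) * fc d gn k else 0 :=
      fc_discSol d n mf gn k
    by_cases hmem : k ∈ Znd d n
    · rw [h1, h2, h3, if_pos (Finset.mem_erase.mpr ⟨hk, hmem⟩), huk k hk]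
      ring
    · have hk_er : k ∉ (Znd d n).erase 0 := fun h => hmem (Finset.mem_of_mem_erase h)
      rw [h1, h2, h3, if_neg hk_er, fc_Sn d n hgn hmem, huk k hk]
      simp only [hmf]
      ring
  -- pointwise inequality between summands
  have hnormsq : ∀ (k : Fin d → ℤ), k ≠ 0 → ‖fc d e k‖^2 = (mf k)^2 * ‖fc d δ k‖^2 := by
    intro k hk
    rw [hfc_e k hk, norm_mul, mul_pow, Complex.norm_real, Real.norm_eq_abs,
      abs_of_nonneg (hm_nonneg k)]
  have hpoint : ∀ k : {k : Fin d → ℤ // k ≠ 0},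
      sobFamC d s (fc d e) k + (α/2) * sobFamC d (-β) (fc d e) k ≤
        (α/2) * sobFamC d (-β) (fc d δ) k := by
    rintro ⟨k, hk⟩
    have hK : 0 < knorm d k := knorm_pos d hk
    set T : ℝ := knorm d k ^ (2 * (s + β)) with hTdef
    have hsplit : knorm d k ^ (2*s) = T * knorm d k ^ (2*(-β)) := by
      rw [hTdef, ← Real.rpow_add hK]
      ring_nf
    have hkey : (mf k)^2 * (T + α/2) ≤ α/2 := key_ineq ha (hT k)
    have hK2b : 0 ≤ knorm d k ^ (2*(-β)) := Real.rpow_nonneg (le_of_lt hK) _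
    have hD : 0 ≤ ‖fc d δ k‖^2 := sq_nonneg _
    simp only [sobFamC, hnormsq k hk, hsplit]
    nlinarith [mul_le_mul_of_nonneg_left hkey (mul_nonneg hK2b hD)]
  -- nonnegativity of summands
  have hnn : ∀ (μ : ℝ) (c : (Fin d → ℤ) → ℂ) (k : {k : Fin d → ℤ // k ≠ 0}),
      0 ≤ sobFamC d μ c k := by
    intro μ c k
    exact mul_nonneg (Real.rpow_nonneg (Real.sqrt_nonneg _) _) (sq_nonneg _)
  -- summability
  have hCsum : Summable (fun k : {k : Fin d → ℤ // k ≠ 0} => sobFamC d (-β) (fc d δ) k) := by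
    have hb := (bessel_fc d hδLp).subtype {k : Fin d → ℤ | k ≠ 0}
    refine Summable.of_nonneg_of_le (fun k => hnn _ _ k) (fun k => ?_) hb
    have h1 : knorm d k.1 ^ (2*(-β)) ≤ 1 :=
      Real.rpow_le_one_of_one_le_of_nonpos (knorm_one_le d k.2) (by linarith)
    calc sobFamC d (-β) (fc d δ) k ≤ 1 * ‖fc d δ k.1‖^2 :=
          mul_le_mul_of_nonneg_right h1 (sq_nonneg _)
    _ = ‖fc d δ k.1‖^2 := one_mul _
  have hBsum : Summable (fun k : {k : Fin d → ℤ // k ≠ 0} => sobFamC d (-β) (fc d e) k) := by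
    refine Summable.of_nonneg_of_le (fun k => hnn _ _ k) (fun k => ?_) hCsum
    have := hpoint k
    have h1 := hnn s (fc d e) k
    nlinarith
  have hAsum : Summable (fun k : {k : Fin d → ℤ // k ≠ 0} => sobFamC d s (fc d e) k) := by
    refine Summable.of_nonneg_of_le (fun k => hnn _ _ k) (fun k => ?_) (hCsum.mul_left (α/2))
    have := hpoint k
    have h1 := hnn (-β) (fc d e) k
    nlinarith
  -- convert seminorms to tsums
  have hsq : ∀ (μ : ℝ) (c : (Fin d → ℤ) → ℂ),
      sobNormC d μ c ^ 2 = ∑' k, sobFamC d μ c k := by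
    intro μ c
    rw [sobNormC, Real.sq_sqrt (tsum_nonneg (fun k => hnn μ c k))]
  show sobNormC d s (fc d e) ^ 2 + (α/2) * sobNormC d (-β) (fc d e) ^ 2 ≤
      (α/2) * sobNormC d (-β) (fc d δ) ^ 2
  rw [hsq, hsq, hsq, ← tsum_mul_left, ← tsum_mul_left,
    ← Summable.tsum_add hAsum (hBsum.mul_left (α/2))]
  exact Summable.tsum_le_tsum hpoint (hAsum.add (hBsum.mul_left (α/2))) (hCsum.mul_left (α/2))


end
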